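/- arXiv:math/0510643 — 3 statements merged into one kernel-verified Lean document; each statement's English description precedes it below -/
import Mathlib

section
/- Let g be twice continuously differentiable on [1,∞) with β ≥ 0, satisfying g'' + (1 + βg²/ρ + 1/(4ρ²)) g = F, where ∫₁^∞ |F(τ)| dτ < ∞. Then the limit lim_{ρ→∞} (g'(ρ)² + g(ρ)²)^{1/2} exists, provided g and g' remain bounded. -/
open MeasureTheory Filter Set

/-- Convergence of the amplitude `(g'² + g²)^{1/2}` as `ρ → ∞`. -/
theorem stmt_2 (g F : ℝ → ℝ) (β : ℝ) (hβ : 0 ≤ β)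
    (hg : ContDiff ℝ 2 g) (hF : Continuous F)
    (hode : ∀ ρ ≥ (1:ℝ),
      deriv (deriv g) ρ + (1 + β * (g ρ)^2 / ρ + 1 / (4 * ρ^2)) * g ρ = F ρ)
    (hFint : MeasureTheory.IntegrableOn (fun τ => |F τ|) (Set.Ici 1))
    (B : ℝ) (hbdd : ∀ ρ ≥ (1:ℝ), |g ρ| ≤ B ∧ |deriv g ρ| ≤ B) :
    ∃ L : ℝ, Filter.Tendsto (fun ρ => Real.sqrt ((deriv g ρ)^2 + (g ρ)^2))
      Filter.atTop (nhds L) := by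
  have hB : 0 ≤ B := (abs_nonneg _).trans (hbdd 1 le_rfl).1
  -- differentiability facts
  have hg2 : ContDiff ℝ ((1:WithTop ℕ∞)+1) g := by
    have : ((1:WithTop ℕ∞)+1) = 2 := by norm_num
    rw [this]; exact hg
  have hd1 : ContDiff ℝ 1 (deriv g) := (contDiff_succ_iff_deriv.mp hg2).2.2
  have hdiffg : Differentiable ℝ g := hg.differentiable (by norm_num)
  have hdiffd : Differentiable ℝ (deriv g) := hd1.differentiable one_ne_zero
  have hcontd : Continuous (deriv g) := hdiffd.continuous
  -- the modified energy and its derivative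
  set E : ℝ → ℝ := fun ρ => (deriv g ρ)^2 + (g ρ)^2 + β/2 * (ρ⁻¹ * (g ρ)^4)
      + 1/4 * ((g ρ)^2 * ((ρ^2)⁻¹)) with hE
  set f : ℝ → ℝ := fun ρ => 2 * deriv g ρ * F ρ - β * (g ρ)^4 / (2*ρ^2)
      - (g ρ)^2 / (2*ρ^3) with hf
  have key : ∀ ρ ≥ (1:ℝ), HasDerivAt E (f ρ) ρ := by
    intro ρ hρ
    have hρ0 : ρ ≠ 0 := by positivity
    have h1 : HasDerivAt g (deriv g ρ) ρ := (hdiffg ρ).hasDerivAt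
    have h2 : HasDerivAt (deriv g) (deriv (deriv g) ρ) ρ := (hdiffd ρ).hasDerivAt
    have H : HasDerivAt E
        ((2 * deriv g ρ ^ 1 * deriv (deriv g) ρ + 2 * g ρ ^ 1 * deriv g ρ)
         + β/2 * (-(ρ^2)⁻¹ * (g ρ)^4 + ρ⁻¹ * (4 * g ρ ^ 3 * deriv g ρ))
         + 1/4 * ((2 * g ρ ^ 1 * deriv g ρ) * (ρ^2)⁻¹
            + (g ρ)^2 * (-(2 * ρ ^ 1) / (ρ^2)^2))) ρ := by
      exact (((h2.pow 2).add (h1.pow 2)).add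
          (((hasDerivAt_inv hρ0).mul (h1.pow 4)).const_mul (β/2))).add
        ((((h1.pow 2).mul ((hasDerivAt_pow 2 ρ).inv (pow_ne_zero 2 hρ0)))).const_mul (1/4))
    convert H using 1
    have hodeρ := hode ρ hρ
    have : deriv (deriv g) ρ = F ρ - (1 + β * (g ρ)^2 / ρ + 1 / (4 * ρ^2)) * g ρ := by
      linarith
    rw [hf, this]
    field_simp
    ring
  -- integrability of f
  have hbound : IntegrableOn (fun τ => 2*B*|F τ| + β*B^4/2 * (τ^2)⁻¹ + B^2/2 * (τ^3)⁻¹)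
      (Set.Ici 1) := by
    apply ((hFint.const_mul (2*B)).add ?_).add ?_
    · have : IntegrableOn (fun τ : ℝ => τ ^ (-2:ℝ)) (Ioi 1) :=
        integrableOn_Ioi_rpow_of_lt (by norm_num) one_pos
      have h2 : IntegrableOn (fun τ : ℝ => (τ^2)⁻¹) (Ioi 1) := by
        apply this.congr_fun (fun x hx => ?_) measurableSet_Ioi
        have hx0 : (0:ℝ) ≤ x := by have := Set.mem_Ioi.mp hx; linarith
        rw [Real.rpow_neg hx0, Real.rpow_two]
      exact ((integrableOn_Ici_iff_integrableOn_Ioi).mpr h2).const_mul _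
    · have : IntegrableOn (fun τ : ℝ => τ ^ (-3:ℝ)) (Ioi 1) :=
        integrableOn_Ioi_rpow_of_lt (by norm_num) one_pos
      have h3 : IntegrableOn (fun τ : ℝ => (τ^3)⁻¹) (Ioi 1) := by
        apply this.congr_fun (fun x hx => ?_) measurableSet_Ioi
        have hx0 : (0:ℝ) ≤ x := by have := Set.mem_Ioi.mp hx; linarith
        rw [Real.rpow_neg hx0]
        norm_num
      exact ((integrableOn_Ici_iff_integrableOn_Ioi).mpr h3).const_mul _
  have hfmeas : ContinuousOn f (Set.Ici 1) := by
    apply ContinuousOn.sub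
    apply ContinuousOn.sub
    · exact (((continuous_const.mul hcontd).mul hF)).continuousOn
    · exact ContinuousOn.div (continuous_const.mul (hdiffg.continuous.pow 4)).continuousOn
        (by fun_prop) (fun x hx => by have : (1:ℝ) ≤ x := hx; positivity)
    · exact ContinuousOn.div (hdiffg.continuous.pow 2).continuousOn
        (by fun_prop) (fun x hx => by have : (1:ℝ) ≤ x := hx; positivity)
  have hfint : IntegrableOn f (Set.Ici 1) := by
    apply hbound.mono' (hfmeas.aestronglyMeasurable measurableSet_Ici)
    filter_upwards [MeasureTheory.ae_restrict_mem measurableSet_Ici] with τ hτ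
    have hτ1 : (1:ℝ) ≤ τ := hτ
    have hτ0 : (0:ℝ) < τ := by linarith
    obtain ⟨hgB, hdB⟩ := hbdd τ hτ1
    have h1 : |2 * deriv g τ * F τ| ≤ 2*B*|F τ| := by
      rw [abs_mul, abs_mul]
      have : |deriv g τ| * |F τ| ≤ B * |F τ| :=
        mul_le_mul_of_nonneg_right hdB (abs_nonneg _)
      simp only [abs_two]
      nlinarith [abs_nonneg (F τ)]
    have hg4 : (g τ)^4 ≤ B^4 := by
      calc (g τ)^4 = |g τ|^4 := by
            rw [← abs_pow]; exact (abs_of_nonneg (by positivity)).symm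
        _ ≤ B^4 := pow_le_pow_left₀ (abs_nonneg _) hgB 4
    have hg2' : (g τ)^2 ≤ B^2 := by
      calc (g τ)^2 = |g τ|^2 := (sq_abs _).symm
        _ ≤ B^2 := pow_le_pow_left₀ (abs_nonneg _) hgB 2
    have h2 : |β * (g τ)^4 / (2*τ^2)| ≤ β*B^4/2 * (τ^2)⁻¹ := by
      rw [abs_of_nonneg (by positivity : (0:ℝ) ≤ β * (g τ)^4 / (2*τ^2))]
      have heq : β*B^4/2 * (τ^2)⁻¹ = β*B^4 / (2*τ^2) := by ring
      rw [heq]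
      gcongr
    have h3 : |(g τ)^2 / (2*τ^3)| ≤ B^2/2 * (τ^3)⁻¹ := by
      rw [abs_of_nonneg (by positivity : (0:ℝ) ≤ (g τ)^2 / (2*τ^3))]
      have heq : B^2/2 * (τ^3)⁻¹ = B^2 / (2*τ^3) := by ring
      rw [heq]
      gcongr
    calc ‖f τ‖ = |2 * deriv g τ * F τ - β * (g τ)^4 / (2*τ^2) - (g τ)^2 / (2*τ^3)| := rfl
      _ ≤ |2 * deriv g τ * F τ| + |β * (g τ)^4 / (2*τ^2)| + |(g τ)^2 / (2*τ^3)| := by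
          exact (abs_sub _ _).trans (by gcongr; exact abs_sub _ _)
      _ ≤ 2*B*|F τ| + β*B^4/2 * (τ^2)⁻¹ + B^2/2 * (τ^3)⁻¹ := by gcongr
  -- FTC
  have hFTC : ∀ ρ ≥ (1:ℝ), E ρ = E 1 + ∫ t in (1:ℝ)..ρ, f t := by
    intro ρ hρ
    have : ∫ t in (1:ℝ)..ρ, f t = E ρ - E 1 := by
      apply intervalIntegral.integral_eq_sub_of_hasDerivAt
      · intro x hx
        rw [Set.uIcc_of_le hρ] at hx
        exact key x hx.1
      · apply (hfint.mono_set ?_).intervalIntegrable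
        rw [Set.uIcc_of_le hρ]
        exact Set.Icc_subset_Ici_self
    linarith
  have hioi : IntegrableOn f (Ioi 1) := hfint.mono_set Set.Ioi_subset_Ici_self
  have hTint : Tendsto (fun ρ : ℝ => ∫ t in (1:ℝ)..ρ, f t) atTop
      (nhds (∫ t in Ioi (1:ℝ), f t)) :=
    intervalIntegral_tendsto_integral_Ioi 1 hioi tendsto_id
  have hTE : Tendsto E atTop (nhds (E 1 + ∫ t in Ioi (1:ℝ), f t)) := by
    apply Tendsto.congr' ?_ (tendsto_const_nhds.add hTint)
    filter_upwards [eventually_ge_atTop (1:ℝ)] with ρ hρ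
    exact (hFTC ρ hρ).symm
  -- corrections tend to 0
  have hcorr : Tendsto (fun ρ => β/2 * (ρ⁻¹ * (g ρ)^4) + 1/4 * ((g ρ)^2 * ((ρ^2)⁻¹)))
      atTop (nhds 0) := by
    apply squeeze_zero_norm' (a := fun ρ => (β*B^4/2 + B^2/4) * ρ⁻¹)
    · filter_upwards [eventually_ge_atTop (1:ℝ)] with ρ hρ
      have hρ0 : (0:ℝ) < ρ := by linarith
      obtain ⟨hgB, _⟩ := hbdd ρ hρ
      have hg4 : (g ρ)^4 ≤ B^4 := by
        calc (g ρ)^4 = |g ρ|^4 := by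
              rw [← abs_pow]; exact (abs_of_nonneg (by positivity)).symm
          _ ≤ B^4 := pow_le_pow_left₀ (abs_nonneg _) hgB 4
      have hg2' : (g ρ)^2 ≤ B^2 := by
        calc (g ρ)^2 = |g ρ|^2 := (sq_abs _).symm
          _ ≤ B^2 := pow_le_pow_left₀ (abs_nonneg _) hgB 2
      have hinv : (ρ^2)⁻¹ ≤ ρ⁻¹ := by
        rw [inv_le_inv₀ (by positivity) hρ0]
        nlinarith
      have hinvpos : (0:ℝ) < ρ⁻¹ := by positivity
      have hinv2pos : (0:ℝ) ≤ (ρ^2)⁻¹ := by positivity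
      rw [Real.norm_eq_abs, abs_of_nonneg (by positivity)]
      have e1 : β/2 * (ρ⁻¹ * (g ρ)^4) ≤ β*B^4/2 * ρ⁻¹ := by
        nlinarith [mul_le_mul_of_nonneg_left hg4 hinvpos.le]
      have e2 : 1/4 * ((g ρ)^2 * ((ρ^2)⁻¹)) ≤ B^2/4 * ρ⁻¹ := by
        nlinarith [mul_le_mul_of_nonneg_left hg2' hinv2pos,
          mul_le_mul_of_nonneg_left hinv (by positivity : (0:ℝ) ≤ B^2)]
      nlinarith
    · have := tendsto_inv_atTop_zero (𝕜 := ℝ)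
      have h := this.const_mul (β*B^4/2 + B^2/4)
      simpa using h
  have hmain : Tendsto (fun ρ => (deriv g ρ)^2 + (g ρ)^2) atTop
      (nhds (E 1 + ∫ t in Ioi (1:ℝ), f t)) := by
    have := hTE.sub hcorr
    simp only [sub_zero] at this
    apply this.congr
    intro ρ
    simp only [hE]
    ring
  exact ⟨Real.sqrt (E 1 + ∫ t in Ioi (1:ℝ), f t),
    (Real.continuous_sqrt.tendsto _).comp hmain⟩
end

section
/- Let V : ℝ → ℝ be twice continuously differentiable with compact support. Then (∫ |V'(y)|⁴ e^{|y|} dy)^{1/2} ≤ C (sup |V|) (∫ (|V''|² + |V'|² + |V|²) e^{|y|} dy)^{1/2} for an absolute constant C. -/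
open MeasureTheory Filter Set

/-- Pointwise Young-type bound used to absorb the quartic term. -/
lemma stmt9_aux (m u a b : ℝ) (hm : 0 ≤ m) (hu : |u| ≤ m) :
    |3*u*a^2*b + u*a^3| ≤ a^4/2 + 6*m^2*(b^2 + a^2 + u^2) := by
  have h := abs_add_le (3*u*a^2*b) (u*a^3)
  have e1 : |3*u*a^2*b| = 3 * |u| * |a| ^ 2 * |b| := by
    rw [abs_mul, abs_mul, abs_mul, abs_pow]
    norm_num
  have e2 : |u*a^3| = |u| * |a| ^ 3 := by rw [abs_mul, abs_pow]
  have ea4 : a^4 = |a|^4 := by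
    rw [← abs_pow, abs_of_nonneg (by positivity)]
  have ea2 : a^2 = |a|^2 := (sq_abs a).symm
  have eb2 : b^2 = |b|^2 := (sq_abs b).symm
  have ha := abs_nonneg a
  have hb := abs_nonneg b
  have hu0 := abs_nonneg u
  have hsq : u^2 ≥ 0 := sq_nonneg u
  rw [e1, e2] at h
  refine h.trans ?_
  rw [ea4, eb2]
  nlinarith [sq_nonneg (|a| ^ 2 - 4*m*|b|), sq_nonneg (|a| ^ 2 - 4*m*|a|),
    mul_nonneg (mul_nonneg hm ha) hb, mul_nonneg hm ha, sq_abs a,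
    mul_le_mul_of_nonneg_right hu (by positivity : (0:ℝ) ≤ |a| ^ 2 * |b|),
    mul_le_mul_of_nonneg_right hu (by positivity : (0:ℝ) ≤ |a| ^ 3),
    sq_nonneg (m*|a|), sq_nonneg u, sq_nonneg m]

/-- Weighted interpolation (Gagliardo–Nirenberg) inequality with weight `e^{|y|}`. -/
theorem stmt_9 : ∃ C : ℝ, 0 < C ∧ ∀ V : ℝ → ℝ, ContDiff ℝ 2 V → HasCompactSupport V →
    Real.sqrt (∫ y, |deriv V y|^4 * Real.exp |y|) ≤
      C * (⨆ y, |V y|) *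
        Real.sqrt (∫ y, (|deriv (deriv V) y|^2 + |deriv V y|^2 + |V y|^2) * Real.exp |y|) := by
  refine ⟨4, by norm_num, ?_⟩
  intro V hV hVc
  -- basic regularity facts
  have hVdiff : Differentiable ℝ V := hV.differentiable two_ne_zero
  have hV'cd : ContDiff ℝ 1 (deriv V) :=
    (contDiff_succ_iff_deriv.mp (show ContDiff ℝ (1+1) V by norm_num; exact_mod_cast hV)).2.2
  have hV'diff : Differentiable ℝ (deriv V) := hV'cd.differentiable one_ne_zero
  have hVcont : Continuous V := hV.continuous
  have hV'cont : Continuous (deriv V) := hV'cd.continuous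
  have hV''cont : Continuous (deriv (deriv V)) := hV'cd.continuous_deriv le_rfl
  have hV'c : HasCompactSupport (deriv V) := hVc.deriv
  have hV''c : HasCompactSupport (deriv (deriv V)) := hVc.deriv.deriv
  have hexp : Continuous fun y : ℝ => Real.exp |y| :=
    Real.continuous_exp.comp _root_.continuous_abs
  -- supremum bound
  set M := ⨆ y, |V y| with hMdef
  have hbdd : BddAbove (Set.range fun y => |V y|) :=
    hVcont.abs.bddAbove_range_of_hasCompactSupport hVc.abs
  have hMle : ∀ y, |V y| ≤ M := fun y => le_ciSup hbdd y
  have hM0 : 0 ≤ M := le_trans (abs_nonneg _) (hMle 0)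
  -- abbreviations
  set f : ℝ → ℝ := fun y => (deriv V y)^4 * Real.exp |y| with hfdef
  set s : ℝ → ℝ := fun y =>
    ((deriv (deriv V) y)^2 + (deriv V y)^2 + (V y)^2) * Real.exp |y| with hsdef
  -- rewrite the goal in terms of f and s
  have hgoalL : (∫ y, |deriv V y|^4 * Real.exp |y|) = ∫ y, f y := by
    congr 1; funext y
    rw [hfdef]
    congr 1
    rw [← abs_pow, abs_of_nonneg (by positivity)]
  have hgoalR : (∫ y, (|deriv (deriv V) y|^2 + |deriv V y|^2 + |V y|^2) * Real.exp |y|)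
      = ∫ y, s y := by
    congr 1; funext y
    rw [hsdef]
    simp [sq_abs]
  rw [hgoalL, hgoalR]
  -- integrability
  have csf : HasCompactSupport fun y => (deriv V y)^4 :=
    hV'c.comp_left (g := fun t : ℝ => t^4) (by norm_num)
  have int_f : Integrable f := by
    exact ((hV'cont.pow 4).mul hexp).integrable_of_hasCompactSupport (csf.mul_right)
  have css : HasCompactSupport fun y =>
      (deriv (deriv V) y)^2 + (deriv V y)^2 + (V y)^2 := by
    exact ((hV''c.comp_left (g := fun t : ℝ => t^2) (by norm_num)).add
      (hV'c.comp_left (g := fun t : ℝ => t^2) (by norm_num))).add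
      (hVc.comp_left (g := fun t : ℝ => t^2) (by norm_num))
  have conts : Continuous fun y =>
      (deriv (deriv V) y)^2 + (deriv V y)^2 + (V y)^2 :=
    ((hV''cont.pow 2).add (hV'cont.pow 2)).add (hVcont.pow 2)
  have int_s : Integrable s :=
    (conts.mul hexp).integrable_of_hasCompactSupport (css.mul_right)
  have hS0 : 0 ≤ ∫ y, s y := integral_nonneg fun y => by
    simp only [hsdef]; positivity
  set A := ∫ y, f y with hAdef
  set S := ∫ y, s y with hSdef
  have hA0 : 0 ≤ A := integral_nonneg fun y => by simp only [hfdef]; positivity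
  -- lower order terms from integration by parts
  set gp : ℝ → ℝ := fun y =>
    V y * ((deriv V y)^2 * (3*deriv (deriv V) y + deriv V y) * Real.exp y) with hgpdef
  set gm : ℝ → ℝ := fun y =>
    V y * ((deriv V y)^2 * (3*deriv (deriv V) y - deriv V y) * Real.exp (-y)) with hgmdef
  -- compact support and continuity of the auxiliary functions
  have cgp : Continuous gp := by
    rw [hgpdef]
    fun_prop
  have cgm : Continuous gm := by
    rw [hgmdef]
    fun_prop
  have csgp : HasCompactSupport gp := hVc.mul_right
  have csgm : HasCompactSupport gm := hVc.mul_right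
  have int_gp : Integrable gp := cgp.integrable_of_hasCompactSupport csgp
  have int_gm : Integrable gm := cgm.integrable_of_hasCompactSupport csgm
  -- derivative computations
  have hF : ∀ y : ℝ, HasDerivAt (fun y => V y * (deriv V y)^3 * Real.exp y)
      ((deriv V y)^4 * Real.exp y + gp y) y := by
    intro y
    have h1 : HasDerivAt V (deriv V y) y := (hVdiff y).hasDerivAt
    have h2 : HasDerivAt (deriv V) (deriv (deriv V) y) y := (hV'diff y).hasDerivAt
    have h3 : HasDerivAt (fun y => (deriv V y)^3)
        (3*(deriv V y)^2*(deriv (deriv V) y)) y := by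
      have := h2.pow 3
      norm_num at this
      first
      | exact this
      | (convert this using 1; ring)
    have h4 := (h1.mul h3).mul (Real.hasDerivAt_exp y)
    refine h4.congr_deriv ?_
    rw [hgpdef, Pi.mul_apply]
    ring
  have hG : ∀ y : ℝ, HasDerivAt (fun y => V y * (deriv V y)^3 * Real.exp (-y))
      ((deriv V y)^4 * Real.exp (-y) + gm y) y := by
    intro y
    have h1 : HasDerivAt V (deriv V y) y := (hVdiff y).hasDerivAt
    have h2 : HasDerivAt (deriv V) (deriv (deriv V) y) y := (hV'diff y).hasDerivAt
    have h3 : HasDerivAt (fun y => (deriv V y)^3)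
        (3*(deriv V y)^2*(deriv (deriv V) y)) y := by
      have := h2.pow 3
      norm_num at this
      first
      | exact this
      | (convert this using 1; ring)
    have hexp' : HasDerivAt (fun y : ℝ => Real.exp (-y)) (-Real.exp (-y)) y := by
      have := (Real.hasDerivAt_exp (-y)).comp y (hasDerivAt_neg y)
      first
      | exact this
      | exact this.congr_deriv (by ring)
    have h4 := (h1.mul h3).mul hexp'
    refine h4.congr_deriv ?_
    rw [hgmdef, Pi.mul_apply]
    ring
  -- tendsto of boundary terms
  have csF : HasCompactSupport fun y => V y * (deriv V y)^3 * Real.exp y :=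
    (hVc.mul_right).mul_right
  have csG : HasCompactSupport fun y => V y * (deriv V y)^3 * Real.exp (-y) :=
    (hVc.mul_right).mul_right
  have tendF : Tendsto (fun y => V y * (deriv V y)^3 * Real.exp y) atTop (nhds 0) := by
    rw [hasCompactSupport_iff_eventuallyEq, Filter.coclosedCompact_eq_cocompact] at csF
    exact csF.filter_mono _root_.atTop_le_cocompact |>.tendsto
  have tendG : Tendsto (fun y => V y * (deriv V y)^3 * Real.exp (-y)) atBot (nhds 0) := by
    rw [hasCompactSupport_iff_eventuallyEq, Filter.coclosedCompact_eq_cocompact] at csG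
    exact csG.filter_mono _root_.atBot_le_cocompact |>.tendsto
  -- integrability of the derivatives
  have intF' : Integrable fun y => (deriv V y)^4 * Real.exp y + gp y := by
    refine Continuous.integrable_of_hasCompactSupport ?_ ?_
    · rw [hgpdef]; fun_prop
    · exact (csf.mul_right).add csgp
  have intG' : Integrable fun y => (deriv V y)^4 * Real.exp (-y) + gm y := by
    refine Continuous.integrable_of_hasCompactSupport ?_ ?_
    · rw [hgmdef]; fun_prop
    · exact (csf.mul_right).add csgm
  -- IBP on the right half line
  have ibpR : (∫ y in Ioi (0:ℝ), ((deriv V y)^4 * Real.exp y + gp y))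
      = - (V 0 * (deriv V 0)^3 * Real.exp 0) := by
    have := integral_Ioi_of_hasDerivAt_of_tendsto' (a := 0) (f' := fun y =>
        (deriv V y)^4 * Real.exp y + gp y)
        (fun x _ => hF x) intF'.integrableOn tendF
    rw [this]; ring
  have ibpL : (∫ y in Iic (0:ℝ), ((deriv V y)^4 * Real.exp (-y) + gm y))
      = V 0 * (deriv V 0)^3 * Real.exp 0 := by
    have := integral_Iic_of_hasDerivAt_of_tendsto' (a := 0) (f' := fun y =>
        (deriv V y)^4 * Real.exp (-y) + gm y)
        (fun x _ => hG x) intG'.integrableOn tendG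
    rw [this]; ring
  -- identify f on each half line
  have congrR : (∫ y in Ioi (0:ℝ), f y)
      = ∫ y in Ioi (0:ℝ), ((deriv V y)^4 * Real.exp y + gp y) - gp y := by
    refine setIntegral_congr_fun measurableSet_Ioi fun y hy => ?_
    have : |y| = y := abs_of_nonneg (le_of_lt hy)
    simp only [hfdef, this]
    ring
  have congrL : (∫ y in Iic (0:ℝ), f y)
      = ∫ y in Iic (0:ℝ), ((deriv V y)^4 * Real.exp (-y) + gm y) - gm y := by
    refine setIntegral_congr_fun measurableSet_Iic fun y hy => ?_
    have : |y| = -y := abs_of_nonpos hy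
    simp only [hfdef, this]
    ring
  -- the key identity
  have key : A = - (∫ y in Iic (0:ℝ), gm y) - ∫ y in Ioi (0:ℝ), gp y := by
    have hsplit : (∫ y in Iic (0:ℝ), f y) + (∫ y in Ioi (0:ℝ), f y) = A :=
      intervalIntegral.integral_Iic_add_Ioi int_f.integrableOn int_f.integrableOn
    rw [← hsplit, congrR, congrL,
      integral_sub intG'.integrableOn int_gm.integrableOn,
      integral_sub intF'.integrableOn int_gp.integrableOn, ibpR, ibpL]
    ring
  -- pointwise bound for the lower-order terms
  set P : ℝ → ℝ := fun y => (deriv V y)^4/2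
    + 6*M^2*((deriv (deriv V) y)^2 + (deriv V y)^2 + (V y)^2) with hPdef
  have int_Pe : Integrable fun y => P y * Real.exp |y| := by
    have : (fun y => P y * Real.exp |y|)
        = fun y => (1/2) * f y + (6*M^2) * s y := by
      funext y
      simp only [hPdef, hfdef, hsdef]
      ring
    rw [this]
    exact (int_f.const_mul _).add (int_s.const_mul _)
  have hPe_val : (∫ y, P y * Real.exp |y|) = A/2 + 6*M^2*S := by
    have : (fun y => P y * Real.exp |y|)
        = fun y => (1/2) * f y + (6*M^2) * s y := by
      funext y
      simp only [hPdef, hfdef, hsdef]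
      ring
    rw [this, integral_add (int_f.const_mul _) (int_s.const_mul _),
      integral_const_mul, integral_const_mul, ← hAdef, ← hSdef]
    ring
  -- bound each half-line integral
  have boundR : - (∫ y in Ioi (0:ℝ), gp y) ≤ ∫ y in Ioi (0:ℝ), P y * Real.exp |y| := by
    have h1 : - (∫ y in Ioi (0:ℝ), gp y) ≤ ∫ y in Ioi (0:ℝ), |gp y| := by
      have := norm_integral_le_integral_norm (μ := volume.restrict (Ioi (0:ℝ))) gp
      simp only [Real.norm_eq_abs] at this
      linarith [neg_abs_le (∫ y in Ioi (0:ℝ), gp y)]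
    refine h1.trans ?_
    refine setIntegral_mono_on int_gp.abs.integrableOn int_Pe.integrableOn
      measurableSet_Ioi fun y hy => ?_
    have hab : |y| = y := abs_of_nonneg (le_of_lt hy)
    have hgp_eq : gp y = (3*(V y)*(deriv V y)^2*(deriv (deriv V) y)
        + (V y)*(deriv V y)^3) * Real.exp y := by
      rw [hgpdef]; ring
    rw [hgp_eq, abs_mul, abs_of_nonneg (Real.exp_pos y).le, hab]
    have hkey := stmt9_aux M (V y) (deriv V y) (deriv (deriv V) y) hM0 (hMle y)
    have hPy : |3*(V y)*(deriv V y)^2*(deriv (deriv V) y) + (V y)*(deriv V y)^3|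
        ≤ P y := by
      refine hkey.trans (le_of_eq ?_)
      simp only [hPdef]
      try ring
    exact mul_le_mul_of_nonneg_right hPy (Real.exp_pos y).le
  have boundL : - (∫ y in Iic (0:ℝ), gm y) ≤ ∫ y in Iic (0:ℝ), P y * Real.exp |y| := by
    have h1 : - (∫ y in Iic (0:ℝ), gm y) ≤ ∫ y in Iic (0:ℝ), |gm y| := by
      have := norm_integral_le_integral_norm (μ := volume.restrict (Iic (0:ℝ))) gm
      simp only [Real.norm_eq_abs] at this
      linarith [neg_abs_le (∫ y in Iic (0:ℝ), gm y)]
    refine h1.trans ?_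
    refine setIntegral_mono_on int_gm.abs.integrableOn int_Pe.integrableOn
      measurableSet_Iic fun y hy => ?_
    have hab : |y| = -y := abs_of_nonpos hy
    have hgm_eq : gm y = (3*(V y)*(deriv V y)^2*(deriv (deriv V) y)
        + (V y)*(-(deriv V y))^3) * Real.exp (-y) := by
      rw [hgmdef]; ring
    rw [hgm_eq, abs_mul, abs_of_nonneg (Real.exp_pos (-y)).le, hab]
    have hkey := stmt9_aux M (V y) (-(deriv V y)) (deriv (deriv V) y) hM0 (hMle y)
    have e : 3*(V y)*(-(deriv V y))^2*(deriv (deriv V) y)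
        = 3*(V y)*(deriv V y)^2*(deriv (deriv V) y) := by ring
    rw [e] at hkey
    have hPy : |3*(V y)*(deriv V y)^2*(deriv (deriv V) y) + (V y)*(-(deriv V y))^3|
        ≤ P y := by
      refine hkey.trans (le_of_eq ?_)
      simp only [hPdef]
      try ring
    exact mul_le_mul_of_nonneg_right hPy (Real.exp_pos (-y)).le
  -- absorb
  have habs : A ≤ A/2 + 6*M^2*S := by
    have hsplit : (∫ y in Iic (0:ℝ), P y * Real.exp |y|)
        + (∫ y in Ioi (0:ℝ), P y * Real.exp |y|) = ∫ y, P y * Real.exp |y| :=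
      intervalIntegral.integral_Iic_add_Ioi int_Pe.integrableOn int_Pe.integrableOn
    calc A = - (∫ y in Iic (0:ℝ), gm y) - ∫ y in Ioi (0:ℝ), gp y := key
      _ ≤ (∫ y in Iic (0:ℝ), P y * Real.exp |y|)
          + (∫ y in Ioi (0:ℝ), P y * Real.exp |y|) := by linarith
      _ = A/2 + 6*M^2*S := by rw [hsplit, hPe_val]
  have hA12 : A ≤ 16*M^2*S := by nlinarith [mul_nonneg (mul_nonneg (by norm_num : (0:ℝ) ≤ 4) (sq_nonneg M)) hS0]
  calc Real.sqrt A ≤ Real.sqrt ((4*M)^2 * S) := by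
        apply Real.sqrt_le_sqrt
        nlinarith
    _ = 4 * M * Real.sqrt S := by
        rw [Real.sqrt_mul (by positivity), Real.sqrt_sq (by positivity)]
end

section
/- Suppose V : [1,∞) → ℝ is twice differentiable, satisfies V'' + V + (β/ρ)V³ + V/(4ρ²) = F, and let V_± = e^{∓iρ}(V' ± iV). Then V_± satisfy the first-order system ∂ρ V_± ∓ i g V_± = F_± + e^{∓iρ} F, where g = (3β/(8ρ)) |V_+|² + 1/(8ρ²) and F_± = ± (β/(8iρ))(e^{±2iρ} V_±³ − e^{∓4iρ} V_∓³ + 3 e^{∓2iρ} |V_+|² V_∓) ∓ (i e^{∓2iρ}/(8ρ²)) V_∓. -/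
set_option maxHeartbeats 4000000
open Complex

/-- Reduction of the cubic second-order ODE to a first-order complex system. -/
theorem stmt_14 (V F : ℝ → ℝ) (β : ℝ)
    (hV : Differentiable ℝ V) (hV' : Differentiable ℝ (deriv V))
    (hode : ∀ ρ ≥ (1:ℝ),
      deriv (deriv V) ρ + V ρ + (β / ρ) * (V ρ)^3 + V ρ / (4 * ρ^2) = F ρ)
    (Vp Vm : ℝ → ℂ)
    (hVp : ∀ ρ, Vp ρ = Complex.exp (-Complex.I * ρ) * ((Complex.ofReal (deriv V ρ)) + Complex.I * (Complex.ofReal (V ρ))))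
    (hVm : ∀ ρ, Vm ρ = Complex.exp (Complex.I * ρ) * ((Complex.ofReal (deriv V ρ)) - Complex.I * (Complex.ofReal (V ρ))))
    (g : ℝ → ℝ)
    (hg : ∀ ρ, g ρ = (3 * β / (8 * ρ)) * (‖Vp ρ‖)^2 + 1 / (8 * ρ^2))
    (Fp Fm : ℝ → ℂ)
    (hFp : ∀ ρ, Fp ρ = (β / (8 * Complex.I * ρ)) *
        (Complex.exp (2 * Complex.I * ρ) * (Vp ρ)^3
          - Complex.exp (-4 * Complex.I * ρ) * (Vm ρ)^3
          + 3 * Complex.exp (-2 * Complex.I * ρ) * ((‖Vp ρ‖)^2 : ℝ) * Vm ρ)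
        - (Complex.I * Complex.exp (-2 * Complex.I * ρ) / (8 * ρ^2)) * Vm ρ)
    (hFm : ∀ ρ, Fm ρ = -(β / (8 * Complex.I * ρ)) *
        (Complex.exp (-2 * Complex.I * ρ) * (Vm ρ)^3
          - Complex.exp (4 * Complex.I * ρ) * (Vp ρ)^3
          + 3 * Complex.exp (2 * Complex.I * ρ) * ((‖Vp ρ‖)^2 : ℝ) * Vp ρ)
        + (Complex.I * Complex.exp (2 * Complex.I * ρ) / (8 * ρ^2)) * Vp ρ) :
    ∀ ρ ≥ (1:ℝ),
      deriv Vp ρ - Complex.I * (g ρ : ℂ) * Vp ρ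
          = Fp ρ + Complex.exp (-Complex.I * ρ) * (F ρ : ℂ) ∧
      deriv Vm ρ + Complex.I * (g ρ : ℂ) * Vm ρ
          = Fm ρ + Complex.exp (Complex.I * ρ) * (F ρ : ℂ) := by
  have hVpf : Vp = fun ρ : ℝ => Complex.exp (-Complex.I * ρ) * ((Complex.ofReal (deriv V ρ)) + Complex.I * (Complex.ofReal (V ρ))) := funext hVp
  have hVmf : Vm = fun ρ : ℝ => Complex.exp (Complex.I * ρ) * ((Complex.ofReal (deriv V ρ)) - Complex.I * (Complex.ofReal (V ρ))) := funext hVm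
  subst hVpf hVmf
  intro ρ hρ
  have hρ0 : ρ ≠ 0 := by linarith
  have hρ0' : (ρ : ℂ) ≠ 0 := by exact_mod_cast hρ0
  set a := V ρ with ha_def
  set b := deriv V ρ with hb_def
  set c := deriv (deriv V) ρ with hc_def
  -- derivative computations
  have hda : HasDerivAt (fun ρ : ℝ => ((V ρ : ℂ))) (b : ℂ) ρ := ((hV ρ).hasDerivAt).ofReal_comp
  have hdb : HasDerivAt (fun ρ : ℝ => Complex.ofReal (deriv V ρ)) (c : ℂ) ρ := ((hV' ρ).hasDerivAt).ofReal_comp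
  have hid : HasDerivAt (fun ρ : ℝ => ((ρ : ℂ))) 1 ρ := Complex.ofRealCLM.hasDerivAt
  have hlinm : HasDerivAt (fun ρ : ℝ => (-Complex.I * (ρ:ℂ))) (-Complex.I) ρ := by
    simpa using hid.const_mul (-Complex.I)
  have hlinp : HasDerivAt (fun ρ : ℝ => (Complex.I * (ρ:ℂ))) (Complex.I) ρ := by
    simpa using hid.const_mul (Complex.I)
  have hexpm : HasDerivAt (fun ρ : ℝ => Complex.exp (-Complex.I * ρ))
      (Complex.exp (-Complex.I * ρ) * (-Complex.I)) ρ := hlinm.cexp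
  have hexpp : HasDerivAt (fun ρ : ℝ => Complex.exp (Complex.I * ρ))
      (Complex.exp (Complex.I * ρ) * Complex.I) ρ := hlinp.cexp
  have hDp : deriv (fun ρ : ℝ => Complex.exp (-Complex.I * ρ) * (Complex.ofReal (deriv V ρ) + Complex.I * (V ρ : ℂ))) ρ
      = Complex.exp (-Complex.I * ρ) * (-Complex.I) * ((b : ℂ) + Complex.I * a)
        + Complex.exp (-Complex.I * ρ) * ((c : ℂ) + Complex.I * b) :=
    (hexpm.mul (hdb.add (hda.const_mul Complex.I))).deriv
  have hDm : deriv (fun ρ : ℝ => Complex.exp (Complex.I * ρ) * (Complex.ofReal (deriv V ρ) - Complex.I * (V ρ : ℂ))) ρ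
      = Complex.exp (Complex.I * ρ) * Complex.I * ((b : ℂ) - Complex.I * a)
        + Complex.exp (Complex.I * ρ) * ((c : ℂ) - Complex.I * b) :=
    (hexpp.mul (hdb.sub (hda.const_mul Complex.I))).deriv
  -- the ODE
  have hodeρ : (c : ℂ) = (F ρ : ℂ) - a - (β / ρ) * a^3 - a / (4 * ρ^2) := by
    have := hode ρ hρ
    have h2 : c = F ρ - a - (β / ρ) * a^3 - a / (4 * ρ^2) := by linarith
    push_cast [h2]; ring
  -- the modulus
  have habs : (‖Complex.exp (-Complex.I * ρ) * ((b : ℂ) + Complex.I * a)‖)^2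
      = b^2 + a^2 := by
    have h1 : ‖Complex.exp (-Complex.I * (ρ:ℂ))‖ = 1 := by
      rw [Complex.norm_exp]; simp
    rw [norm_mul, h1, one_mul, Complex.sq_norm,
      show ((b:ℂ) + Complex.I * a) = (b:ℂ) + (a:ℂ) * Complex.I by ring,
      Complex.normSq_add_mul_I]
  -- exponential product identities
  have h1 : Complex.exp (2 * Complex.I * ρ) * (Complex.exp (-Complex.I * ρ))^3
      = Complex.exp (-Complex.I * ρ) := by
    rw [← Complex.exp_nat_mul, ← Complex.exp_add]
    congr 1; push_cast; ring
  have h2 : Complex.exp (-4 * Complex.I * ρ) * (Complex.exp (Complex.I * ρ))^3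
      = Complex.exp (-Complex.I * ρ) := by
    rw [← Complex.exp_nat_mul, ← Complex.exp_add]
    congr 1; push_cast; ring
  have h3 : Complex.exp (-2 * Complex.I * ρ) * Complex.exp (Complex.I * ρ)
      = Complex.exp (-Complex.I * ρ) := by
    rw [← Complex.exp_add]; congr 1; ring
  have h4 : Complex.exp (-2 * Complex.I * ρ) * (Complex.exp (Complex.I * ρ))^3
      = Complex.exp (Complex.I * ρ) := by
    rw [← Complex.exp_nat_mul, ← Complex.exp_add]
    congr 1; push_cast; ring
  have h5 : Complex.exp (4 * Complex.I * ρ) * (Complex.exp (-Complex.I * ρ))^3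
      = Complex.exp (Complex.I * ρ) := by
    rw [← Complex.exp_nat_mul, ← Complex.exp_add]
    congr 1; push_cast; ring
  have h6 : Complex.exp (2 * Complex.I * ρ) * Complex.exp (-Complex.I * ρ)
      = Complex.exp (Complex.I * ρ) := by
    rw [← Complex.exp_add]; congr 1; ring
  have h3n : Complex.exp (-(Complex.I * (ρ:ℂ) * 2)) * Complex.exp (Complex.I * ρ) = Complex.exp (-(Complex.I * ρ)) := by
    rw [← Complex.exp_add]; congr 1; ring
  have h6n : Complex.exp (Complex.I * (ρ:ℂ) * 2) * Complex.exp (-(Complex.I * ρ)) = Complex.exp (Complex.I * ρ) := by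
    rw [← Complex.exp_add]; congr 1; ring
  have hI2 : Complex.I ^ 2 = -1 := Complex.I_sq
  have hI3 : Complex.I ^ 3 = -Complex.I := by
    rw [pow_succ, hI2]; ring
  have hI4 : Complex.I ^ 4 = 1 := by
    rw [show (4:ℕ) = 2*2 from rfl, pow_mul, hI2]; norm_num
  constructor
  · rw [hDp, hg, hFp]
    simp only [← ha_def, ← hb_def, habs]
    rw [hodeρ]
    simp only [mul_pow, ← mul_assoc, h1, h2, h3]
    push_cast
    field_simp [hρ0']
    ring_nf
    try simp only [Complex.inv_I, hI2, hI3, hI4, h3n, h6n]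
    ring_nf
    try simp only [Complex.inv_I, hI2, hI3, hI4, h3n, h6n]
    try ring
    rw [← h3n]; ring
  · rw [hDm, hg, hFm]
    simp only [← ha_def, ← hb_def, habs]
    rw [hodeρ]
    simp only [mul_pow, ← mul_assoc, h4, h5, h6]
    push_cast
    field_simp [hρ0']
    ring_nf
    try simp only [Complex.inv_I, hI2, hI3, hI4, h3n, h6n]
    ring_nf
    try simp only [Complex.inv_I, hI2, hI3, hI4, h3n, h6n]
    try ring
    rw [← h6n]; ring
end
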